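/- Let k be an algebraically closed field, J an ideal of k[x_1,...,x_d], A = k[x_1,...,x_d]/J, and π : k[x_1,...,x_d] → A the quotient map. If f is a polynomial such that φ(π(f)) = 0 for every n ≥ 1 and every k-algebra homomorphism φ : A → M_n(k), then f ∈ J. -/

import Mathlib

open MvPolynomial
set_option maxHeartbeats 2000000
set_option synthInstance.maxHeartbeats 400000

private lemma prod_pow_mem_pow {R ι : Type*} [CommRing R] (I : Ideal R) (s : Finset ι)
    (x : ι → R) (e : ι → ℕ) (hx : ∀ i ∈ s, x i ∈ I) :
    (∏ i ∈ s, x i ^ e i) ∈ I ^ (∑ i ∈ s, e i) := by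
  classical
  induction s using Finset.induction with
  | empty => simp [Ideal.one_eq_top]
  | @insert a s ha ih =>
    rw [Finset.prod_insert ha, Finset.sum_insert ha, pow_add]
    exact Ideal.mul_mem_mul (Ideal.pow_mem_pow (hx _ (Finset.mem_insert_self _ _)) _)
      (ih fun i hi => hx _ (Finset.mem_insert_of_mem hi))

private lemma monomial_mem_pow {k : Type*} [CommRing k] {d : ℕ} (I : Ideal (MvPolynomial (Fin d) k))
    (hX : ∀ i, (X i : MvPolynomial (Fin d) k) ∈ I) (N : ℕ) (u : (Fin d) →₀ ℕ) (c : k)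
    (hu : N ≤ u.sum fun _ e => e) :
    monomial u c ∈ I ^ N := by
  rw [monomial_eq]
  apply Ideal.mul_mem_left
  have h1 : (u.prod fun i e => (X i : MvPolynomial (Fin d) k) ^ e) ∈ I ^ (u.sum fun _ e => e) := by
    rw [Finsupp.prod, Finsupp.sum]
    exact prod_pow_mem_pow I _ _ _ fun i _ => hX i
  exact Ideal.pow_le_pow_right hu h1

private lemma finite_of_kills_high_monomials {k : Type*} [Field k] {d : ℕ} {B : Type*}
    [CommRing B] [Algebra k B] (ψ : MvPolynomial (Fin d) k →ₐ[k] B)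
    (hsurj : Function.Surjective ψ) (N : ℕ)
    (hmono : ∀ (u : (Fin d) →₀ ℕ) (c : k), N ≤ (u.sum fun _ e => e) → ψ (monomial u c) = 0) :
    Module.Finite k B := by
  classical
  apply Module.Finite.of_surjective
    (ψ.toLinearMap.comp (restrictTotalDegree (Fin d) k N).subtype)
  intro b
  obtain ⟨p, rfl⟩ := hsurj b
  set q : MvPolynomial (Fin d) k :=
    ∑ u ∈ p.support.filter (fun u => (u.sum fun _ e => e) ≤ N), monomial u (coeff u p) with hq
  have hqmem : q ∈ restrictTotalDegree (Fin d) k N := by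
    apply Submodule.sum_mem
    intro u hu
    rw [Finset.mem_filter] at hu
    rw [mem_restrictTotalDegree]
    exact le_trans (totalDegree_monomial_le _ _) hu.2
  refine ⟨⟨q, hqmem⟩, ?_⟩
  have : ψ p = ψ q := by
    conv_lhs => rw [p.as_sum]
    rw [hq, map_sum, map_sum]
    rw [← Finset.sum_filter_add_sum_filter_not p.support (fun u => (u.sum fun _ e => e) ≤ N)]
    rw [add_eq_left]
    apply Finset.sum_eq_zero
    intro u hu
    rw [Finset.mem_filter] at hu
    exact hmono u _ (le_of_not_ge hu.2)
  simp [this.symm]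

/-- Let `k` be an algebraically closed field and `J` an ideal of `k[x₁,…,x_d]`.
If `f` is a polynomial whose image in `A = k[x]/J` is killed by every `k`-algebra
homomorphism `A → Mₙ(k)` (for every `n ≥ 1`), then `f ∈ J`. -/
theorem mem_of_forall_finiteDim_rep_quotient_eq_zero
    (k : Type*) [Field k] [IsAlgClosed k] (d : ℕ)
    (J : Ideal (MvPolynomial (Fin d) k)) (f : MvPolynomial (Fin d) k)
    (h : ∀ (n : ℕ), 0 < n →
      ∀ φ : (MvPolynomial (Fin d) k ⧸ J) →ₐ[k] Matrix (Fin n) (Fin n) k,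
        φ (Ideal.Quotient.mkₐ k J f) = 0) :
    f ∈ J := by
  classical
  by_contra hf
  set a : MvPolynomial (Fin d) k ⧸ J := Ideal.Quotient.mkₐ k J f with ha
  have ha0 : a ≠ 0 := by
    simpa [ha, Ideal.Quotient.mkₐ_eq_mk, Ideal.Quotient.eq_zero_iff_mem] using hf
  -- find a maximal ideal containing the annihilator of `a`
  obtain ⟨m, hm, hml⟩ := Ideal.exists_le_maximal (Ideal.torsionOf _ _ a) (by
    intro htop
    have h1 : (1 : MvPolynomial (Fin d) k ⧸ J) ∈ Ideal.torsionOf _ _ a := by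
      rw [htop]; exact Submodule.mem_top
    rw [Ideal.mem_torsionOf_iff, one_smul] at h1
    exact ha0 h1)
  haveI : m.IsMaximal := hm
  -- localize and use Krull's intersection theorem
  set Aₘ := Localization.AtPrime m with hAₘ
  haveI : IsNoetherianRing Aₘ :=
    IsLocalization.isNoetherianRing m.primeCompl Aₘ inferInstance
  have hbot : (⨅ n : ℕ, (IsLocalRing.maximalIdeal Aₘ) ^ n) = ⊥ :=
    Ideal.iInf_pow_eq_bot_of_isLocalRing (R := Aₘ) _
      (Ideal.IsMaximal.ne_top (IsLocalRing.maximalIdeal.isMaximal Aₘ))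
  have haₘ : algebraMap _ Aₘ a ≠ 0 := by
    intro h0
    rw [IsLocalization.map_eq_zero_iff m.primeCompl Aₘ a] at h0
    obtain ⟨s, hs⟩ := h0
    have hst : (s : MvPolynomial (Fin d) k ⧸ J) ∈ Ideal.torsionOf _ _ a := by
      rw [Ideal.mem_torsionOf_iff, smul_eq_mul]; exact hs
    exact s.2 (hml hst)
  obtain ⟨N, hN⟩ : ∃ N : ℕ, algebraMap _ Aₘ a ∉ (IsLocalRing.maximalIdeal Aₘ) ^ N := by
    by_contra hc
    push_neg at hc
    exact haₘ (by rw [← Submodule.mem_bot (R := Aₘ), ← hbot]; exact Submodule.mem_iInf _ |>.mpr hc)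
  have haN : a ∉ m ^ N := by
    intro hmem
    apply hN
    rw [← Localization.AtPrime.map_eq_maximalIdeal, ← Ideal.map_pow]
    exact Ideal.mem_map_of_mem _ hmem
  have hN0 : N ≠ 0 := by
    rintro rfl
    simp [Ideal.one_eq_top] at hN
  -- the maximal ideal upstairs and the Nullstellensatz
  set M : Ideal (MvPolynomial (Fin d) k) := m.comap (Ideal.Quotient.mk J) with hM
  haveI hMmax : M.IsMaximal :=
    Ideal.comap_isMaximal_of_surjective _ Ideal.Quotient.mk_surjective
  obtain ⟨x, hMx⟩ := (MvPolynomial.isMaximal_iff_eq_vanishingIdeal_singleton (I := M)).mp hMmax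
  -- the translation automorphism
  set τ : MvPolynomial (Fin d) k →ₐ[k] MvPolynomial (Fin d) k :=
    aeval (fun i => X i - C (x i)) with hτ
  have hτsurj : Function.Surjective τ := by
    intro p
    refine ⟨aeval (fun i => X i + C (x i)) p, ?_⟩
    have hcomp : τ.comp (aeval (fun i => X i + C (x i)) :
        MvPolynomial (Fin d) k →ₐ[k] MvPolynomial (Fin d) k) = AlgHom.id k _ := by
      apply MvPolynomial.algHom_ext
      intro i
      simp [hτ, algebraMap_eq]
    have := DFunLike.congr_fun hcomp p
    simpa using this
  -- the finite-dimensional quotient B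
  set B := (MvPolynomial (Fin d) k ⧸ J) ⧸ (m ^ N) with hB
  set ψ : MvPolynomial (Fin d) k →ₐ[k] B :=
    (Ideal.Quotient.mkₐ k (m ^ N)).comp (Ideal.Quotient.mkₐ k J) with hψ
  set ψτ : MvPolynomial (Fin d) k →ₐ[k] B := ψ.comp τ with hψτ
  have hψτsurj : Function.Surjective ψτ := by
    intro b
    obtain ⟨b₁, rfl⟩ := Ideal.Quotient.mkₐ_surjective k (m ^ N) b
    obtain ⟨b₂, rfl⟩ := Ideal.Quotient.mkₐ_surjective k J b₁
    obtain ⟨p, rfl⟩ := hτsurj b₂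
    exact ⟨p, rfl⟩
  -- high-degree monomials are killed by ψτ
  have hkill : ∀ (u : (Fin d) →₀ ℕ) (c : k), N ≤ (u.sum fun _ e => e) →
      ψτ (monomial u c) = 0 := by
    have hX : ∀ i, (X i : MvPolynomial (Fin d) k) ∈
        vanishingIdeal k ({fun _ => 0} : Set (Fin d → k)) := by
      intro i
      rw [mem_vanishingIdeal_singleton_iff]
      simp
    set θ : MvPolynomial (Fin d) k →+* (MvPolynomial (Fin d) k ⧸ J) :=
      (Ideal.Quotient.mk J).comp (τ : MvPolynomial (Fin d) k →+* MvPolynomial (Fin d) k) with hθ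
    have hmapM : Ideal.map θ (vanishingIdeal k ({fun _ => 0} : Set (Fin d → k))) ≤ m := by
      rw [Ideal.map_le_iff_le_comap]
      intro p hp
      show θ p ∈ m
      have hτpM : τ p ∈ M := by
        rw [hMx, mem_vanishingIdeal_singleton_iff]
        have hcomp : (aeval x : MvPolynomial (Fin d) k →ₐ[k] k).comp τ =
            aeval (fun _ => (0 : k)) := by
          apply MvPolynomial.algHom_ext
          intro i
          simp [hτ]
        have h1 := DFunLike.congr_fun hcomp p
        have h2 : ∀ q : MvPolynomial (Fin d) k, (aeval x : MvPolynomial (Fin d) k →ₐ[k] k) q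
            = eval x q := fun q => by rw [aeval_def, Algebra.algebraMap_self]; rfl
        have h3 : (aeval (fun _ => (0 : k)) : MvPolynomial (Fin d) k →ₐ[k] k) p
            = eval (fun _ => (0 : k)) p := by rw [aeval_def, Algebra.algebraMap_self]; rfl
        rw [mem_vanishingIdeal_singleton_iff] at hp
        simp only [AlgHom.comp_apply] at h1
        rw [h1, hp]
      exact hτpM
    intro u c hu
    have h1 : monomial u c ∈ (vanishingIdeal k ({fun _ => 0} : Set (Fin d → k))) ^ N :=
      monomial_mem_pow _ hX N u c hu
    have h2 : θ (monomial u c) ∈ m ^ N := by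
      have h3 : θ (monomial u c) ∈
          Ideal.map θ ((vanishingIdeal k ({fun _ => 0} : Set (Fin d → k))) ^ N) :=
        Ideal.mem_map_of_mem _ h1
      rw [Ideal.map_pow] at h3
      exact Ideal.pow_right_mono hmapM N h3
    show (Ideal.Quotient.mkₐ k (m ^ N)) ((Ideal.Quotient.mkₐ k J) (τ (monomial u c))) = 0
    rw [Ideal.Quotient.mkₐ_eq_mk, Ideal.Quotient.eq_zero_iff_mem]
    exact h2
  haveI hfin : Module.Finite k B := @finite_of_kills_high_monomials k _ d B _ _ ψτ hψτsurj N hkill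
  haveI : Nontrivial B := by
    apply Ideal.Quotient.nontrivial_iff.mpr
    intro htop
    exact hm.ne_top (top_le_iff.mp (htop ▸ Ideal.pow_le_self hN0))
  set n := Module.finrank k B with hn
  have hnpos : 0 < n := Module.finrank_pos
  set bas : Module.Basis (Fin n) k B := Module.finBasis k B with hbas
  set φ : (MvPolynomial (Fin d) k ⧸ J) →ₐ[k] Matrix (Fin n) (Fin n) k :=
    ((algEquivMatrix bas).toAlgHom.comp
      ((Algebra.lmul k B).comp (Ideal.Quotient.mkₐ k (m ^ N)))) with hφ
  have h0 := h n hnpos φ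
  rw [hφ] at h0
  simp only [AlgHom.comp_apply, AlgEquiv.toAlgHom_eq_coe, AlgHom.coe_coe] at h0
  rw [AlgEquiv.coe_algHom, map_eq_zero_iff _ (algEquivMatrix bas).injective] at h0
  rw [map_eq_zero_iff _ (Algebra.lmul_injective)] at h0
  rw [Ideal.Quotient.mkₐ_eq_mk, Ideal.Quotient.eq_zero_iff_mem] at h0
  exact haN h0
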